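/- Factorization ℓ^p = d_M(p)·g_M(p): let 1 ≤ p < ∞ and let (a_n) be a sequence of positive reals with partial sums A_n = ∑_{j≤n} a_j. Define d(p) = {y : ∑_n a_n sup_{k≥n} |y_k|^p < ∞} with norm ‖y‖_{d(p)} = (∑_n a_n sup_{k≥n}|y_k|^p)^{1/p}, and g(p) = {z : sup_n A_n^{-1} ∑_{k≤n} |z_k|^p < ∞} with norm ‖z‖_{g(p)} = sup_n (A_n^{-1} ∑_{k≤n}|z_k|^p)^{1/p}. Then a sequence x lies in ℓ^p if and only if x = y·z (coordinatewise product) for some y ∈ d(p) and z ∈ g(p), and moreover ‖x‖_p = inf{ ‖y‖_{d(p)} ‖z‖_{g(p)} : x = y·z }. -/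

import Mathlib

open scoped ENNReal NNReal

/-- The norm of the space `d(p)`: `(∑_n a_n · sup_{k ≥ n} |y_k|^p)^(1/p)`. -/
noncomputable def dNorm (a : ℕ → ℝ) (p : ℝ) (y : ℕ → ℂ) : ℝ≥0∞ :=
  (∑' n : ℕ, ENNReal.ofReal (a n) *
      (⨆ k : ℕ, ⨆ _ : n ≤ k, (‖y k‖₊ : ℝ≥0∞) ^ p)) ^ (1 / p)

/-- The norm of the space `g(p)`: `sup_n (A_n⁻¹ ∑_{k ≤ n} |z_k|^p)^(1/p)`. -/
noncomputable def gNorm (a : ℕ → ℝ) (p : ℝ) (z : ℕ → ℂ) : ℝ≥0∞ :=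
  ⨆ n : ℕ, ((∑ j ∈ Finset.range (n + 1), ENNReal.ofReal (a j))⁻¹ *
      ∑ k ∈ Finset.range (n + 1), (‖z k‖₊ : ℝ≥0∞) ^ p) ^ (1 / p)

/-- The `ℓ^p` norm. -/
noncomputable def lpNorm (p : ℝ) (x : ℕ → ℂ) : ℝ≥0∞ :=
  (∑' n : ℕ, (‖x n‖₊ : ℝ≥0∞) ^ p) ^ (1 / p)

open Finset

namespace Bennett

noncomputable section

variable (X αe : ℕ → ℝ≥0∞)

/-- Sum of `X` over `[i, m)`. -/
def sig (i m : ℕ) : ℝ≥0∞ := ∑ k ∈ Finset.Ico i m, X k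

/-- Sum of `αe` over `[i, m)`. -/
def bet (i m : ℕ) : ℝ≥0∞ := ∑ k ∈ Finset.Ico i m, αe k

/-- Maximal average of `X` w.r.t. `αe` over intervals starting at `i`. -/
def cc (i : ℕ) : ℝ≥0∞ := ⨆ m, ⨆ _ : i < m, sig X i m / bet αe i m

open Classical in
/-- Least endpoint (exclusive) realizing the maximal average, if any. -/
def ee (i : ℕ) : Option ℕ :=
  if h : ∃ m, i < m ∧ sig X i m / bet αe i m = cc X αe i then some (Nat.find h) else none

/-- Start of the block containing `n`. -/
def st : ℕ → ℕ
  | 0 => 0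
  | n+1 =>
    match ee X αe (st n) with
    | none => st n
    | some m => if n+1 < m then st n else m

/-- The level function. -/
def lev (n : ℕ) : ℝ≥0∞ := cc X αe (st X αe n)

variable {X αe}

lemma sig_succ {i n : ℕ} (h : i ≤ n) : sig X i (n+1) = sig X i n + X n :=
  Finset.sum_Ico_succ_top h X

lemma bet_succ {i n : ℕ} (h : i ≤ n) : bet αe i (n+1) = bet αe i n + αe n :=
  Finset.sum_Ico_succ_top h αe

lemma bet_mono (i : ℕ) {m m' : ℕ} (h : m ≤ m') : bet αe i m ≤ bet αe i m' :=
  Finset.sum_le_sum_of_subset (Finset.Ico_subset_Ico le_rfl h)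

lemma bet_ne_zero (hα0 : ∀ n, αe n ≠ 0) {i m : ℕ} (h : i < m) : bet αe i m ≠ 0 := by
  intro h0
  exact hα0 i (Finset.sum_eq_zero_iff.1 h0 i (Finset.mem_Ico.2 ⟨le_rfl, h⟩))

lemma bet_ne_top (hαt : ∀ n, αe n ≠ ∞) (i m : ℕ) : bet αe i m ≠ ∞ :=
  (ENNReal.sum_lt_top.2 fun k _ => (hαt k).lt_top).ne

lemma sig_le_tail (i m : ℕ) : sig X i m ≤ ∑' k, X (k + i) := by
  rw [sig, Finset.sum_Ico_eq_sum_range]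
  calc ∑ k ∈ Finset.range (m - i), X (i + k)
      = ∑ k ∈ Finset.range (m - i), X (k + i) := by
        exact Finset.sum_congr rfl fun k _ => by rw [add_comm]
    _ ≤ ∑' k, X (k + i) := ENNReal.sum_le_tsum _

lemma sig_le_tsum (i m : ℕ) : sig X i m ≤ ∑' k, X k :=
  ENNReal.sum_le_tsum _

lemma avg_le_cc {i m : ℕ} (h : i < m) : sig X i m / bet αe i m ≤ cc X αe i :=
  le_iSup₂ (f := fun m (_ : i < m) => sig X i m / bet αe i m) m h

lemma sig_le_mul (hα0 : ∀ n, αe n ≠ 0) (hαt : ∀ n, αe n ≠ ∞) {i m : ℕ} (h : i ≤ m) :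
    sig X i m ≤ cc X αe i * bet αe i m := by
  rcases eq_or_lt_of_le h with rfl | h
  · simp [sig]
  · exact (ENNReal.div_le_iff (bet_ne_zero hα0 h) (bet_ne_top hαt i m)).1 (avg_le_cc h)

lemma cc_ne_top (hα0 : ∀ n, αe n ≠ 0) (hT : ∑' k, X k ≠ ∞) (i : ℕ) : cc X αe i ≠ ∞ := by
  have h1 : cc X αe i ≤ (∑' k, X k) / αe i := by
    refine iSup₂_le fun m hm => ENNReal.div_le_div (sig_le_tsum i m) ?_
    exact Finset.single_le_sum (f := αe) (fun k _ => zero_le) (Finset.mem_Ico.2 ⟨le_rfl, hm⟩)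
  exact (h1.trans_lt (ENNReal.div_lt_top hT (hα0 i))).ne

lemma ee_spec {i m : ℕ} (h : ee X αe i = some m) :
    i < m ∧ sig X i m / bet αe i m = cc X αe i := by
  unfold ee at h
  split at h
  · rename_i hex
    simp only [Option.some.injEq] at h
    exact h ▸ Nat.find_spec hex
  · exact absurd h (by simp)

lemma ee_none {i : ℕ} (h : ee X αe i = none) :
    ∀ m, i < m → sig X i m / bet αe i m ≠ cc X αe i := by
  unfold ee at h
  split at h
  · exact absurd h (by simp)
  · rename_i hex
    intro m him heq
    exact hex ⟨m, him, heq⟩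

lemma ee_eq (hα0 : ∀ n, αe n ≠ 0) (hαt : ∀ n, αe n ≠ ∞) {i m : ℕ}
    (h : ee X αe i = some m) : sig X i m = cc X αe i * bet αe i m := by
  obtain ⟨him, heq⟩ := ee_spec h
  rw [← heq, ENNReal.div_mul_cancel (bet_ne_zero hα0 him) (bet_ne_top hαt i m)]

/-- The next block's maximal average is at most the current one. -/
lemma cc_next_le (hα0 : ∀ n, αe n ≠ 0) (hαt : ∀ n, αe n ≠ ∞) (hT : ∑' k, X k ≠ ∞) {i m : ℕ}
    (h : ee X αe i = some m) : cc X αe m ≤ cc X αe i := by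
  obtain ⟨him, _⟩ := ee_spec h
  refine iSup₂_le fun m' hm' => ?_
  by_contra hlt
  push_neg at hlt
  have hb0 := bet_ne_zero hα0 hm'
  have hbt := bet_ne_top hαt m m'
  have h1 : cc X αe i * bet αe m m' < sig X m m' :=
    (ENNReal.lt_div_iff_mul_lt (Or.inl hb0) (Or.inl hbt)).1 hlt
  have hsplit : sig X i m + sig X m m' = sig X i m' :=
    Finset.sum_Ico_consecutive X him.le hm'.le
  have hbsplit : bet αe i m + bet αe m m' = bet αe i m' :=
    Finset.sum_Ico_consecutive αe him.le hm'.le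
  have h2 : cc X αe i * bet αe i m' < sig X i m' := by
    rw [← hsplit, ← hbsplit, mul_add, ee_eq hα0 hαt h]
    exact ENNReal.add_lt_add_left
      (ENNReal.mul_ne_top (cc_ne_top hα0 hT i) (bet_ne_top hαt i m)) h1
  have h3 : cc X αe i < sig X i m' / bet αe i m' := by
    refine (ENNReal.lt_div_iff_mul_lt (Or.inl (bet_ne_zero hα0 (him.trans hm')))
      (Or.inl (bet_ne_top hαt i m'))).2 h2
  exact absurd (avg_le_cc (him.trans hm')) (not_le.2 h3)

/-- If the maximal average is never attained, the tail bound holds. -/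
lemma tail_bound (hα0 : ∀ n, αe n ≠ 0) (hαt : ∀ n, αe n ≠ ∞) (hT : ∑' k, X k ≠ ∞)
    {i : ℕ} (h : ee X αe i = none) (m : ℕ) :
    cc X αe i * bet αe i m ≤ ∑' k, X (k + i) := by
  rcases eq_or_ne (cc X αe i) 0 with hc0 | hc0
  · simp [hc0]
  rcases le_or_gt m i with him | him
  · have : bet αe i m = 0 := by
      rw [bet, Finset.Ico_eq_empty (by omega), Finset.sum_empty]
    simp [this]
  by_contra hcon
  push_neg at hcon
  have hb0 := bet_ne_zero hα0 him
  have hbt := bet_ne_top hαt i m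
  have hr : (∑' k, X (k + i)) / bet αe i m < cc X αe i :=
    (ENNReal.div_lt_iff (Or.inl hb0) (Or.inl hbt)).2 hcon
  have hbig : ∀ m', m ≤ m' → sig X i m' / bet αe i m' ≤ (∑' k, X (k + i)) / bet αe i m :=
    fun m' hm' => ENNReal.div_le_div (sig_le_tail i m') (bet_mono i hm')
  have hpos : (0 : ℝ≥0∞) < cc X αe i := pos_iff_ne_zero.2 hc0
  have hF : (Finset.Ioc i m).sup (fun m' => sig X i m' / bet αe i m') < cc X αe i := by
    refine (Finset.sup_lt_iff hpos).2 fun m' hm' => ?_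
    have him' : i < m' := (Finset.mem_Ioc.1 hm').1
    exact lt_of_le_of_ne (avg_le_cc him') (ee_none h m' him')
  have hle : cc X αe i ≤
      max ((Finset.Ioc i m).sup (fun m' => sig X i m' / bet αe i m'))
        ((∑' k, X (k + i)) / bet αe i m) := by
    refine iSup₂_le fun m' hm' => ?_
    rcases le_or_gt m' m with hmm | hmm
    · exact le_max_of_le_left (Finset.le_sup (f := fun m' => sig X i m' / bet αe i m')
        (Finset.mem_Ioc.2 ⟨hm', hmm⟩))
    · exact le_max_of_le_right (hbig m' hmm.le)
  exact absurd (hle.trans_lt (max_lt hF hr)) (lt_irrefl _)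

lemma st_zero : st X αe 0 = 0 := rfl

lemma st_inv (n : ℕ) :
    st X αe n ≤ n ∧ ∀ m, ee X αe (st X αe n) = some m → n < m := by
  induction n with
  | zero =>
    refine ⟨le_rfl, fun m h => ?_⟩
    exact (ee_spec h).1
  | succ n ih =>
    obtain ⟨h1, h2⟩ := ih
    rcases h : ee X αe (st X αe n) with _ | m
    · have hst : st X αe (n+1) = st X αe n := by
        show (match ee X αe (st X αe n) with
          | none => st X αe n
          | some m => if n+1 < m then st X αe n else m) = st X αe n
        rw [h]
      refine ⟨hst ▸ h1.trans (Nat.le_succ n), fun m' hm' => ?_⟩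
      rw [hst, h] at hm'
      exact absurd hm' (by simp)
    · have hnm : n < m := h2 m h
      by_cases hc : n + 1 < m
      · have hst : st X αe (n+1) = st X αe n := by
          show (match ee X αe (st X αe n) with
            | none => st X αe n
            | some m => if n+1 < m then st X αe n else m) = st X αe n
          rw [h]
          simp [hc]
        refine ⟨hst ▸ h1.trans (Nat.le_succ n), fun m' hm' => ?_⟩
        have hmm : (some m : Option ℕ) = some m' := by rw [← h, ← hst]; exact hm'
        simp only [Option.some.injEq] at hmm
        omega
      · have hm : m = n + 1 := by omega
        have hst : st X αe (n+1) = m := by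
          show (match ee X αe (st X αe n) with
            | none => st X αe n
            | some m => if n+1 < m then st X αe n else m) = m
          rw [h]
          simp [hc]
        refine ⟨hst ▸ hm.le, fun m' hm' => ?_⟩
        rw [hst] at hm'
        have := (ee_spec hm').1
        omega

lemma st_le (n : ℕ) : st X αe n ≤ n := (st_inv n).1

lemma st_succ_cases (n : ℕ) :
    st X αe (n+1) = st X αe n ∨
      (ee X αe (st X αe n) = some (n+1) ∧ st X αe (n+1) = n+1) := by
  rcases h : ee X αe (st X αe n) with _ | m
  · left
    show (match ee X αe (st X αe n) with
      | none => st X αe n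
      | some m => if n+1 < m then st X αe n else m) = st X αe n
    rw [h]
  · by_cases hc : n + 1 < m
    · left
      show (match ee X αe (st X αe n) with
        | none => st X αe n
        | some m => if n+1 < m then st X αe n else m) = st X αe n
      rw [h]; simp [hc]
    · have hnm : n < m := (st_inv n).2 m h
      have hm : m = n + 1 := by omega
      subst hm
      right
      refine ⟨rfl, ?_⟩
      show (match ee X αe (st X αe n) with
        | none => st X αe n
        | some m => if n+1 < m then st X αe n else m) = n+1
      rw [h]; simp [hc]

lemma lev_antitone (hα0 : ∀ n, αe n ≠ 0) (hαt : ∀ n, αe n ≠ ∞) (hT : ∑' k, X k ≠ ∞) :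
    Antitone (lev X αe) := by
  refine antitone_nat_of_succ_le fun n => ?_
  rcases st_succ_cases (X := X) (αe := αe) n with h | ⟨he, h⟩
  · unfold lev; rw [h]
  · unfold lev; rw [h]
    exact cc_next_le hα0 hαt hT he

lemma lev_ne_top (hα0 : ∀ n, αe n ≠ 0) (hT : ∑' k, X k ≠ ∞) (n : ℕ) :
    lev X αe n ≠ ∞ := cc_ne_top hα0 hT _

/-- If the level function vanishes at `n` then so does `X`. -/
lemma X_eq_zero_of_lev_eq_zero (hα0 : ∀ n, αe n ≠ 0) (hαt : ∀ n, αe n ≠ ∞)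
    {n : ℕ} (h : lev X αe n = 0) : X n = 0 := by
  have h1 : sig X (st X αe n) (n+1) ≤ cc X αe (st X αe n) * bet αe (st X αe n) (n+1) :=
    sig_le_mul hα0 hαt ((st_le n).trans (Nat.le_succ n))
  rw [show cc X αe (st X αe n) = lev X αe n from rfl, h, zero_mul] at h1
  have h2 : X n ≤ sig X (st X αe n) (n+1) :=
    Finset.single_le_sum (f := X) (fun k _ => zero_le)
      (Finset.mem_Ico.2 ⟨st_le n, Nat.lt_succ_self n⟩)
  exact le_antisymm (h2.trans h1) zero_le

lemma tsum_range_add_tail_le (i : ℕ) :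
    ∑ k ∈ Finset.range i, X k + ∑' k, X (k + i) ≤ ∑' k, X k := by
  rw [ENNReal.tsum_eq_iSup_nat (f := fun k => X (k + i)), ENNReal.add_iSup]
  refine iSup_le fun N => ?_
  have h1 : ∑ k ∈ Finset.range N, X (k + i) = ∑ k ∈ Finset.Ico i (i + N), X k := by
    rw [Finset.sum_Ico_eq_sum_range, Nat.add_sub_cancel_left]
    exact (Finset.sum_congr rfl fun k _ => by rw [add_comm]).symm
  rw [h1, Finset.range_eq_Ico, Finset.sum_Ico_consecutive X (Nat.zero_le i) (Nat.le_add_right i N),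
    ← Finset.range_eq_Ico]
  exact ENNReal.sum_le_tsum _

/-- Total mass bound for the level function. -/
lemma sum_lev_le (hα0 : ∀ n, αe n ≠ 0) (hαt : ∀ n, αe n ≠ ∞) (hT : ∑' k, X k ≠ ∞) (n : ℕ) :
    ∑ k ∈ Finset.range n, αe k * lev X αe k ≤ ∑' k, X k := by
  have J : ∀ n, ∑ k ∈ Finset.range n, αe k * lev X αe k ≤
      (∑ k ∈ Finset.range (st X αe n), X k) + cc X αe (st X αe n) * bet αe (st X αe n) n := by
    intro n
    induction n with
    | zero => simpa [st_zero] using zero_le _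
    | succ n ih =>
      rw [Finset.sum_range_succ]
      rcases st_succ_cases (X := X) (αe := αe) n with h | ⟨he, h⟩
      · rw [h, bet_succ (st_le n), mul_add]
        calc ∑ k ∈ Finset.range n, αe k * lev X αe k + αe n * lev X αe n
            ≤ ((∑ k ∈ Finset.range (st X αe n), X k) + cc X αe (st X αe n) * bet αe (st X αe n) n)
              + αe n * lev X αe n := add_le_add_left ih _
          _ = (∑ k ∈ Finset.range (st X αe n), X k) +
              (cc X αe (st X αe n) * bet αe (st X αe n) n + cc X αe (st X αe n) * αe n) := by
            rw [lev, mul_comm (αe n)]; ring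
      · rw [h]
        have hbz : bet αe (n+1) (n+1) = 0 := by simp [bet]
        rw [hbz, mul_zero, add_zero]
        have key : ∑ k ∈ Finset.range n, αe k * lev X αe k + αe n * lev X αe n ≤
            (∑ k ∈ Finset.range (st X αe n), X k) + sig X (st X αe n) (n+1) := by
          calc ∑ k ∈ Finset.range n, αe k * lev X αe k + αe n * lev X αe n
              ≤ ((∑ k ∈ Finset.range (st X αe n), X k) +
                  cc X αe (st X αe n) * bet αe (st X αe n) n) + αe n * lev X αe n :=
                add_le_add_left ih _
            _ = (∑ k ∈ Finset.range (st X αe n), X k) +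
                cc X αe (st X αe n) * bet αe (st X αe n) (n+1) := by
                rw [bet_succ (st_le n), mul_add, lev, mul_comm (αe n)]; ring
            _ = (∑ k ∈ Finset.range (st X αe n), X k) + sig X (st X αe n) (n+1) := by
                rw [ee_eq hα0 hαt he]
        refine key.trans (le_of_eq ?_)
        rw [Finset.range_eq_Ico, sig,
          Finset.sum_Ico_consecutive X (Nat.zero_le _) ((st_le n).trans (Nat.le_succ n)), Finset.range_eq_Ico]
  refine (J n).trans ?_
  have htail : cc X αe (st X αe n) * bet αe (st X αe n) n ≤ ∑' k, X (k + st X αe n) := by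
    rcases h : ee X αe (st X αe n) with _ | m
    · exact tail_bound hα0 hαt hT h n
    · have hnm : n < m := (st_inv n).2 m h
      calc cc X αe (st X αe n) * bet αe (st X αe n) n
          ≤ cc X αe (st X αe n) * bet αe (st X αe n) m :=
            mul_le_mul_right (bet_mono _ hnm.le) _
        _ = sig X (st X αe n) m := (ee_eq hα0 hαt h).symm
        _ ≤ ∑' k, X (k + st X αe n) := sig_le_tail _ _
  exact (add_le_add_right htail _).trans (tsum_range_add_tail_le _)

/-- Partial sum bound for `X / lev`. -/
lemma sum_div_le (hα0 : ∀ n, αe n ≠ 0) (hαt : ∀ n, αe n ≠ ∞) (n : ℕ) :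
    ∑ k ∈ Finset.range n, X k / lev X αe k ≤ ∑ k ∈ Finset.range n, αe k := by
  have hdiv : ∀ i m, i ≤ m → sig X i m / cc X αe i ≤ bet αe i m := by
    intro i m him
    exact ENNReal.div_le_of_le_mul ((sig_le_mul hα0 hαt him).trans (le_of_eq (mul_comm _ _)))
  have I : ∀ n, ∑ k ∈ Finset.range n, X k / lev X αe k ≤
      (∑ k ∈ Finset.range (st X αe n), αe k) + sig X (st X αe n) n / cc X αe (st X αe n) := by
    intro n
    induction n with
    | zero => simpa [st_zero, sig] using zero_le _
    | succ n ih =>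
      rw [Finset.sum_range_succ]
      rcases st_succ_cases (X := X) (αe := αe) n with h | ⟨he, h⟩
      · rw [h, sig_succ (st_le n), ENNReal.add_div]
        calc ∑ k ∈ Finset.range n, X k / lev X αe k + X n / lev X αe n
            ≤ ((∑ k ∈ Finset.range (st X αe n), αe k) +
                sig X (st X αe n) n / cc X αe (st X αe n)) + X n / lev X αe n :=
              add_le_add_left ih _
          _ = (∑ k ∈ Finset.range (st X αe n), αe k) +
              (sig X (st X αe n) n / cc X αe (st X αe n) + X n / cc X αe (st X αe n)) := by
              rw [lev]; ring
      · rw [h]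
        have hsz : sig X (n+1) (n+1) = 0 := by simp [sig]
        rw [hsz, ENNReal.zero_div, add_zero]
        calc ∑ k ∈ Finset.range n, X k / lev X αe k + X n / lev X αe n
            ≤ ((∑ k ∈ Finset.range (st X αe n), αe k) +
                sig X (st X αe n) n / cc X αe (st X αe n)) + X n / lev X αe n :=
              add_le_add_left ih _
          _ = (∑ k ∈ Finset.range (st X αe n), αe k) +
              sig X (st X αe n) (n+1) / cc X αe (st X αe n) := by
              rw [sig_succ (st_le n), ENNReal.add_div, lev]; ring
          _ ≤ (∑ k ∈ Finset.range (st X αe n), αe k) + bet αe (st X αe n) (n+1) :=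
              add_le_add_right (hdiv _ _ ((st_le n).trans (Nat.le_succ n))) _
          _ = ∑ k ∈ Finset.range (n+1), αe k := by
              rw [Finset.range_eq_Ico, bet,
                Finset.sum_Ico_consecutive αe (Nat.zero_le _) ((st_le n).trans (Nat.le_succ n)), Finset.range_eq_Ico]
  refine (I n).trans ?_
  calc (∑ k ∈ Finset.range (st X αe n), αe k) + sig X (st X αe n) n / cc X αe (st X αe n)
      ≤ (∑ k ∈ Finset.range (st X αe n), αe k) + bet αe (st X αe n) n :=
        add_le_add_right (hdiv _ _ (st_le n)) _
    _ = ∑ k ∈ Finset.range n, αe k := by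
        rw [Finset.range_eq_Ico, bet,
          Finset.sum_Ico_consecutive αe (Nat.zero_le _) (st_le n), Finset.range_eq_Ico]

end

end Bennett

namespace Bennett3

lemma rpow_iSup (f : ℕ → ℝ≥0∞) {q : ℝ} (hq : 0 < q) : (⨆ n, f n) ^ q = ⨆ n, f n ^ q := by
  apply le_antisymm
  · have h1 : (⨆ n, f n) ≤ (⨆ n, f n ^ q) ^ (1/q) := by
      refine iSup_le fun n => ?_
      have h2 : f n = (f n ^ q) ^ (1/q) := by
        rw [← ENNReal.rpow_mul, mul_one_div, div_self hq.ne', ENNReal.rpow_one]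
      rw [h2]
      exact ENNReal.rpow_le_rpow (le_iSup (fun n => f n ^ q) n) (by positivity)
    calc (⨆ n, f n) ^ q ≤ ((⨆ n, f n ^ q) ^ (1/q)) ^ q := ENNReal.rpow_le_rpow h1 hq.le
      _ = ⨆ n, f n ^ q := by
        rw [← ENNReal.rpow_mul, one_div, inv_mul_cancel₀ hq.ne', ENNReal.rpow_one]
  · exact iSup_le fun n => ENNReal.rpow_le_rpow (le_iSup _ n) hq.le

lemma mul_rearrange {a b c d : ℝ≥0∞} (hab : a ≤ b) (hcd : c ≤ d) :
    a * d + b * c ≤ b * d + a * c := by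
  obtain ⟨e, rfl⟩ := exists_add_of_le hab
  obtain ⟨f, rfl⟩ := exists_add_of_le hcd
  calc a * (c + f) + (a + e) * c = (a * c + a * f + (e * c + a * c)) + 0 := by ring
    _ ≤ (a * c + a * f + (e * c + a * c)) + e * f := add_le_add_right zero_le _
    _ = (a + e) * (c + f) + a * c := by ring

/-- Abel-summation style inequality. -/
lemma abel_ineq (U Z A S : ℕ → ℝ≥0∞) (αe : ℕ → ℝ≥0∞) (G : ℝ≥0∞)
    (hA : ∀ n, A n = ∑ k ∈ Finset.range (n+1), αe k)
    (hS : ∀ n, S n = ∑ k ∈ Finset.range (n+1), Z k)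
    (hU : ∀ n, U (n+1) ≤ U n) (hUt : ∀ n, U n ≠ ∞) (hGt : G ≠ ∞)
    (hAt : ∀ n, A n ≠ ∞)
    (hSG : ∀ n, S n ≤ G * A n) :
    ∀ N, ∑ n ∈ Finset.range (N+1), U n * Z n ≤ G * ∑ n ∈ Finset.range (N+1), αe n * U n := by
  have key : ∀ N, ∑ n ∈ Finset.range (N+1), U n * Z n + U N * (G * A N)
      ≤ G * ∑ n ∈ Finset.range (N+1), αe n * U n + U N * S N := by
    intro N
    induction N with
    | zero =>
      refine le_of_eq ?_
      rw [hA, hS]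
      simp only [Finset.sum_range_succ, Finset.sum_range_zero, zero_add]
      ring
    | succ N ih =>
      have hAsucc : A (N+1) = A N + αe (N+1) := by
        rw [hA, hA, Finset.sum_range_succ]
      have hSsucc : S (N+1) = S N + Z (N+1) := by
        rw [hS, hS, Finset.sum_range_succ]
      have goal2 : ∑ n ∈ Finset.range (N+1), U n * Z n + U (N+1) * (G * A N)
          ≤ G * ∑ n ∈ Finset.range (N+1), αe n * U n + U (N+1) * S N := by
        have h1 : ∑ n ∈ Finset.range (N+1), U n * Z n + U (N+1) * (G * A N) + U N * S N
            ≤ ∑ n ∈ Finset.range (N+1), U n * Z n + (U N * (G * A N) + U (N+1) * S N) := by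
          rw [add_assoc]
          exact add_le_add_right (mul_rearrange (hU N) (hSG N)) _
        have h2 : ∑ n ∈ Finset.range (N+1), U n * Z n + (U N * (G * A N) + U (N+1) * S N)
            = (∑ n ∈ Finset.range (N+1), U n * Z n + U N * (G * A N)) + U (N+1) * S N := by
          ring
        have h3 : (∑ n ∈ Finset.range (N+1), U n * Z n + U N * (G * A N)) + U (N+1) * S N
            ≤ (G * ∑ n ∈ Finset.range (N+1), αe n * U n + U N * S N) + U (N+1) * S N :=
          add_le_add_left ih _
        have h4 : ∑ n ∈ Finset.range (N+1), U n * Z n + U (N+1) * (G * A N) + U N * S N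
            ≤ (G * ∑ n ∈ Finset.range (N+1), αe n * U n + U (N+1) * S N) + U N * S N := by
          refine (h1.trans (le_of_eq h2)).trans (h3.trans (le_of_eq (by ring)))
        have hfin : U N * S N ≠ ∞ := by
          refine ENNReal.mul_ne_top (hUt N) ?_
          exact ((hSG N).trans_lt (ENNReal.mul_lt_top hGt.lt_top (hAt N).lt_top)).ne
        exact (ENNReal.add_le_add_iff_right hfin).1 h4
      calc ∑ n ∈ Finset.range (N+2), U n * Z n + U (N+1) * (G * A (N+1))
          = (∑ n ∈ Finset.range (N+1), U n * Z n + U (N+1) * (G * A N))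
            + (U (N+1) * Z (N+1) + G * (αe (N+1) * U (N+1))) := by
            rw [Finset.sum_range_succ (fun n => U n * Z n) (N+1), hAsucc]; ring
        _ ≤ (G * ∑ n ∈ Finset.range (N+1), αe n * U n + U (N+1) * S N)
            + (U (N+1) * Z (N+1) + G * (αe (N+1) * U (N+1))) := add_le_add_left goal2 _
        _ = G * ∑ n ∈ Finset.range (N+2), αe n * U n + U (N+1) * S (N+1) := by
            rw [Finset.sum_range_succ (fun n => αe n * U n) (N+1), hSsucc]; ring
  intro N
  have h5 : ∑ n ∈ Finset.range (N+1), U n * Z n + U N * (G * A N)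
      ≤ G * ∑ n ∈ Finset.range (N+1), αe n * U n + U N * (G * A N) := by
    refine (key N).trans (add_le_add_right (mul_le_mul_right (hSG N) _) _)
  have hfin : U N * (G * A N) ≠ ∞ :=
    ENNReal.mul_ne_top (hUt N) (ENNReal.mul_ne_top hGt (hAt N))
  exact (ENNReal.add_le_add_iff_right hfin).1 h5

lemma A_ne_zero (a : ℕ → ℝ) (ha : ∀ n, 0 < a n) (n : ℕ) :
    (∑ j ∈ Finset.range (n+1), ENNReal.ofReal (a j)) ≠ 0 := by
  intro h
  exact (ENNReal.ofReal_pos.2 (ha 0)).ne'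
    (Finset.sum_eq_zero_iff.1 h 0 (Finset.mem_range.2 (Nat.succ_pos n)))

lemma A_ne_top (a : ℕ → ℝ) (n : ℕ) :
    (∑ j ∈ Finset.range (n+1), ENNReal.ofReal (a j)) ≠ ∞ :=
  (ENNReal.sum_lt_top.2 fun _ _ => ENNReal.ofReal_lt_top).ne

/-- The main estimate: `∑ U·Z ≤ (∑ α·U) · G`. -/
lemma main_est (αe U Z : ℕ → ℝ≥0∞) (hα0 : ∀ n, αe n ≠ 0) (hαt : ∀ n, αe n ≠ ∞)
    (hU : ∀ n, U (n+1) ≤ U n) :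
    ∑' n, U n * Z n ≤ (∑' n, αe n * U n) *
      ⨆ n, (∑ j ∈ Finset.range (n+1), αe j)⁻¹ * ∑ k ∈ Finset.range (n+1), Z k := by
  set A : ℕ → ℝ≥0∞ := fun n => ∑ j ∈ Finset.range (n+1), αe j with hAdef
  set S : ℕ → ℝ≥0∞ := fun n => ∑ k ∈ Finset.range (n+1), Z k with hSdef
  set D : ℝ≥0∞ := ∑' n, αe n * U n with hDdef
  set G : ℝ≥0∞ := ⨆ n, (A n)⁻¹ * S n with hGdef
  have hA0 : ∀ n, A n ≠ 0 := by
    intro n h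
    exact hα0 0 (Finset.sum_eq_zero_iff.1 h 0 (Finset.mem_range.2 (Nat.succ_pos n)))
  have hAt : ∀ n, A n ≠ ∞ := fun n => (ENNReal.sum_lt_top.2 fun j _ => (hαt j).lt_top).ne
  by_cases hG0 : G = 0
  · have hZ0 : ∀ n, Z n = 0 := by
      intro n
      have h1 : (A n)⁻¹ * S n ≤ G := le_iSup (fun n => (A n)⁻¹ * S n) n
      rw [hG0] at h1
      have h2 : (A n)⁻¹ * S n = 0 := le_antisymm h1 zero_le
      have h3 : S n = 0 := by
        rcases mul_eq_zero.1 h2 with h | h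
        · exact absurd h (ENNReal.inv_ne_zero.2 (hAt n))
        · exact h
      have h4 : Z n ≤ S n :=
        Finset.single_le_sum (f := Z) (fun k _ => zero_le)
          (Finset.mem_range.2 (Nat.lt_succ_self n))
      exact le_antisymm (h4.trans_eq h3) zero_le
    have : ∀ n, U n * Z n = 0 := fun n => by rw [hZ0 n, mul_zero]
    rw [tsum_congr this, tsum_zero]
    exact zero_le
  by_cases hD0 : D = 0
  · have hU0 : ∀ n, U n = 0 := by
      intro n
      have h1 : αe n * U n ≤ D := ENNReal.le_tsum n
      rw [hD0] at h1
      rcases mul_eq_zero.1 (le_antisymm h1 zero_le) with h | h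
      · exact absurd h (hα0 n)
      · exact h
    have : ∀ n, U n * Z n = 0 := fun n => by rw [hU0 n, zero_mul]
    rw [tsum_congr this, tsum_zero]
    exact zero_le
  by_cases hDt : D = ∞
  · rw [hDt, ENNReal.top_mul hG0]
    exact le_top
  by_cases hGt : G = ∞
  · rw [hGt, ENNReal.mul_top hD0]
    exact le_top
  have hUt : ∀ n, U n ≠ ∞ := by
    intro n h
    apply hDt
    have h1 : αe n * U n ≤ D := ENNReal.le_tsum n
    rw [h, ENNReal.mul_top (hα0 n)] at h1
    exact top_le_iff.1 h1
  have hSG : ∀ n, S n ≤ G * A n := by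
    intro n
    have h1 : (A n)⁻¹ * S n ≤ G := le_iSup (fun n => (A n)⁻¹ * S n) n
    have h2 := (ENNReal.inv_mul_le_iff (hA0 n) (hAt n)).1 h1
    rw [mul_comm] at h2
    exact h2
  have key := abel_ineq U Z A S αe G (fun n => rfl) (fun n => rfl) hU hUt hGt hAt hSG
  rw [ENNReal.tsum_eq_iSup_nat (f := fun n => U n * Z n)]
  refine iSup_le fun N => ?_
  calc ∑ n ∈ Finset.range N, U n * Z n ≤ ∑ n ∈ Finset.range (N+1), U n * Z n :=
        Finset.sum_le_sum_of_subset (Finset.range_subset_range.2 (Nat.le_succ N))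
    _ ≤ G * ∑ n ∈ Finset.range (N+1), αe n * U n := key N
    _ ≤ G * D := mul_le_mul_right (ENNReal.sum_le_tsum _) G
    _ = D * G := mul_comm _ _

/-- Bennett's inequality: `‖x‖_p ≤ ‖y‖_{d(p)}·‖z‖_{g(p)}` whenever `x = y·z`. -/
lemma lpNorm_le_mul (p : ℝ) (hp : 1 ≤ p) (a : ℕ → ℝ) (ha : ∀ n, 0 < a n)
    (x y z : ℕ → ℂ) (hxyz : ∀ n, x n = y n * z n) :
    lpNorm p x ≤ dNorm a p y * gNorm a p z := by
  have hp0 : (0:ℝ) < p := lt_of_lt_of_le one_pos hp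
  have hq0 : (0:ℝ) < 1/p := by positivity
  have hterm : ∀ n, (‖x n‖₊ : ℝ≥0∞) ^ p ≤
      (⨆ k, ⨆ _ : n ≤ k, ((‖y k‖₊ : ℝ≥0∞) ^ p)) * (‖z n‖₊ : ℝ≥0∞) ^ p := by
    intro n
    have h1 : (‖x n‖₊ : ℝ≥0∞) ^ p = (‖y n‖₊ : ℝ≥0∞) ^ p * (‖z n‖₊ : ℝ≥0∞) ^ p := by
      rw [hxyz n, nnnorm_mul, ENNReal.coe_mul, ENNReal.mul_rpow_of_nonneg _ _ hp0.le]
    rw [h1]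
    exact mul_le_mul_left
      (le_iSup₂ (f := fun k (_ : n ≤ k) => ((‖y k‖₊ : ℝ≥0∞) ^ p)) n le_rfl) _
  have hmono : ∀ n, (⨆ k, ⨆ _ : n+1 ≤ k, ((‖y k‖₊ : ℝ≥0∞) ^ p)) ≤
      ⨆ k, ⨆ _ : n ≤ k, ((‖y k‖₊ : ℝ≥0∞) ^ p) := by
    intro n
    exact iSup₂_le fun k hk =>
      le_iSup₂ (f := fun k (_ : n ≤ k) => ((‖y k‖₊ : ℝ≥0∞) ^ p)) k ((Nat.le_succ n).trans hk)
  have hmain : ∑' n, (‖x n‖₊ : ℝ≥0∞) ^ p ≤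
      (∑' n, ENNReal.ofReal (a n) * ⨆ k, ⨆ _ : n ≤ k, ((‖y k‖₊ : ℝ≥0∞) ^ p)) *
        ⨆ n, (∑ j ∈ Finset.range (n+1), ENNReal.ofReal (a j))⁻¹ *
          ∑ k ∈ Finset.range (n+1), (‖z k‖₊ : ℝ≥0∞) ^ p :=
    (ENNReal.tsum_le_tsum hterm).trans
      (main_est (fun n => ENNReal.ofReal (a n)) _ _
        (fun n => (ENNReal.ofReal_pos.2 (ha n)).ne') (fun _ => ENNReal.ofReal_ne_top) hmono)
  rw [lpNorm, dNorm, gNorm, ← rpow_iSup _ hq0]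
  calc (∑' n, (‖x n‖₊ : ℝ≥0∞) ^ p) ^ (1/p)
      ≤ ((∑' n, ENNReal.ofReal (a n) * ⨆ k, ⨆ _ : n ≤ k, ((‖y k‖₊ : ℝ≥0∞) ^ p)) *
          ⨆ n, (∑ j ∈ Finset.range (n+1), ENNReal.ofReal (a j))⁻¹ *
            ∑ k ∈ Finset.range (n+1), (‖z k‖₊ : ℝ≥0∞) ^ p) ^ (1/p) :=
        ENNReal.rpow_le_rpow hmain hq0.le
    _ = _ := ENNReal.mul_rpow_of_nonneg _ _ hq0.le

open Bennett

/-- Construction of a near-optimal factorization. -/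
lemma exists_factorization (p : ℝ) (hp : 1 ≤ p) (a : ℕ → ℝ) (ha : ∀ n, 0 < a n)
    (x : ℕ → ℂ) (hx : lpNorm p x ≠ ∞) :
    ∃ y z : ℕ → ℂ, dNorm a p y ≤ lpNorm p x ∧ gNorm a p z ≤ 1 ∧ ∀ n, x n = y n * z n := by
  have hp0 : (0:ℝ) < p := lt_of_lt_of_le one_pos hp
  have hq0 : (0:ℝ) < 1/p := by positivity
  set X : ℕ → ℝ≥0∞ := fun n => (‖x n‖₊ : ℝ≥0∞) ^ p with hXdef
  set αe : ℕ → ℝ≥0∞ := fun n => ENNReal.ofReal (a n) with hαdef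
  have hα0 : ∀ n, αe n ≠ 0 := fun n => (ENNReal.ofReal_pos.2 (ha n)).ne'
  have hαt : ∀ n, αe n ≠ ∞ := fun _ => ENNReal.ofReal_ne_top
  have hT : ∑' n, X n ≠ ∞ := by
    intro h
    apply hx
    rw [lpNorm, show ∑' (n : ℕ), (‖x n‖₊ : ℝ≥0∞) ^ p = ∑' n, X n from rfl, h,
      ENNReal.top_rpow_of_pos hq0]
  set U : ℕ → ℝ≥0∞ := Bennett.lev X αe with hUdef
  have hanti : Antitone U := Bennett.lev_antitone hα0 hαt hT
  have hUt : ∀ n, U n ≠ ∞ := fun n => Bennett.lev_ne_top hα0 hT n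
  set yv : ℕ → ℝ := fun n => (U n).toReal ^ (1/p) with hyvdef
  have hyv0 : ∀ n, 0 ≤ yv n := fun n => Real.rpow_nonneg ENNReal.toReal_nonneg _
  have hynorm : ∀ n, (‖(yv n : ℂ)‖₊ : ℝ≥0∞) ^ p = U n := by
    intro n
    rw [Complex.nnnorm_real, ← enorm_eq_nnnorm, Real.enorm_eq_ofReal (hyv0 n),
      ENNReal.ofReal_rpow_of_nonneg (hyv0 n) hp0.le, hyvdef]
    show ENNReal.ofReal (((U n).toReal ^ (1/p)) ^ p) = U n
    rw [← Real.rpow_mul ENNReal.toReal_nonneg, one_div_mul_cancel hp0.ne', Real.rpow_one,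
      ENNReal.ofReal_toReal (hUt n)]
  have hyU0 : ∀ n, (yv n : ℂ) = 0 → U n = 0 := by
    intro n h
    have h1 : yv n = 0 := Complex.ofReal_eq_zero.1 h
    have h2 : (U n).toReal = 0 :=
      (Real.rpow_eq_zero ENNReal.toReal_nonneg hq0.ne').1 h1
    rcases (ENNReal.toReal_eq_zero_iff _).1 h2 with h3 | h3
    · exact h3
    · exact absurd h3 (hUt n)
  have hy0 : ∀ n, (yv n : ℂ) = 0 → x n = 0 := by
    intro n h
    have hU0 : U n = 0 := hyU0 n h
    have hX0 : X n = 0 := Bennett.X_eq_zero_of_lev_eq_zero hα0 hαt hU0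
    have h4 : (‖x n‖₊ : ℝ≥0∞) = 0 := by
      rcases ENNReal.rpow_eq_zero_iff.1 hX0 with ⟨h5, _⟩ | ⟨h5, _⟩
      · exact h5
      · exact absurd h5 ENNReal.coe_ne_top
    exact nnnorm_eq_zero.1 (by exact_mod_cast h4)
  have hznorm : ∀ n, (‖x n / (yv n : ℂ)‖₊ : ℝ≥0∞) ^ p = X n / U n := by
    intro n
    by_cases h : (yv n : ℂ) = 0
    · have hx0 : x n = 0 := hy0 n h
      have hU0 : U n = 0 := hyU0 n h
      rw [h, div_zero, hU0]
      have hX0 : X n = 0 := by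
        rw [hXdef]
        show (‖x n‖₊ : ℝ≥0∞) ^ p = 0
        rw [hx0, nnnorm_zero, ENNReal.coe_zero, ENNReal.zero_rpow_of_pos hp0]
      rw [hX0]
      simp [ENNReal.zero_rpow_of_pos hp0]
    · rw [nnnorm_div, ENNReal.coe_div (nnnorm_ne_zero_iff.2 h),
        ENNReal.div_rpow_of_nonneg _ _ hp0.le, hynorm n]
  refine ⟨fun n => (yv n : ℂ), fun n => x n / (yv n : ℂ), ?_, ?_, ?_⟩
  · -- dNorm bound
    have hsup : ∀ n, (⨆ k, ⨆ _ : n ≤ k, ((‖(yv k : ℂ)‖₊ : ℝ≥0∞) ^ p)) = U n := by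
      intro n
      simp only [hynorm]
      exact le_antisymm (iSup₂_le fun k hk => hanti hk)
        (le_iSup₂ (f := fun k (_ : n ≤ k) => U k) n le_rfl)
    rw [dNorm, lpNorm]
    refine ENNReal.rpow_le_rpow ?_ hq0.le
    calc ∑' n, ENNReal.ofReal (a n) * ⨆ k, ⨆ _ : n ≤ k, ((‖(yv k : ℂ)‖₊ : ℝ≥0∞) ^ p)
        = ∑' n, αe n * U n := by
          refine tsum_congr fun n => ?_
          rw [hsup n]
      _ ≤ ∑' n, X n := by
          rw [ENNReal.tsum_eq_iSup_nat (f := fun n => αe n * U n)]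
          exact iSup_le fun N => Bennett.sum_lev_le hα0 hαt hT N
  · -- gNorm bound
    rw [gNorm]
    refine iSup_le fun n => ENNReal.rpow_le_one ?_ hq0.le
    have hS : ∑ k ∈ Finset.range (n+1), (‖x k / (yv k : ℂ)‖₊ : ℝ≥0∞) ^ p
        ≤ ∑ j ∈ Finset.range (n+1), αe j := by
      calc ∑ k ∈ Finset.range (n+1), (‖x k / (yv k : ℂ)‖₊ : ℝ≥0∞) ^ p
          = ∑ k ∈ Finset.range (n+1), X k / U k :=
            Finset.sum_congr rfl fun k _ => hznorm k
        _ ≤ ∑ j ∈ Finset.range (n+1), αe j := Bennett.sum_div_le hα0 hαt (n+1)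
    calc (∑ j ∈ Finset.range (n+1), ENNReal.ofReal (a j))⁻¹ *
          ∑ k ∈ Finset.range (n+1), (‖x k / (yv k : ℂ)‖₊ : ℝ≥0∞) ^ p
        ≤ (∑ j ∈ Finset.range (n+1), αe j)⁻¹ * ∑ j ∈ Finset.range (n+1), αe j :=
          mul_le_mul_right hS _
      _ = 1 := ENNReal.inv_mul_cancel (A_ne_zero a ha n) (A_ne_top a n)
  · -- factorization
    intro n
    show x n = (yv n : ℂ) * (x n / (yv n : ℂ))
    by_cases h : (yv n : ℂ) = 0
    · rw [h, zero_mul]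
      exact hy0 n h
    · rw [mul_comm, div_mul_cancel₀ _ h]

end Bennett3

open Bennett3 in
theorem stmt13 (p : ℝ) (hp : 1 ≤ p) (a : ℕ → ℝ) (ha : ∀ n, 0 < a n) (x : ℕ → ℂ) :
    (lpNorm p x < ∞ ↔
      ∃ y z : ℕ → ℂ, dNorm a p y < ∞ ∧ gNorm a p z < ∞ ∧ ∀ n, x n = y n * z n) ∧
    lpNorm p x =
      ⨅ (y : ℕ → ℂ) (z : ℕ → ℂ) (_ : ∀ n, x n = y n * z n),
        dNorm a p y * gNorm a p z := by
  constructor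
  · constructor
    · intro h
      obtain ⟨y, z, hd, hg, hxyz⟩ := exists_factorization p hp a ha x h.ne
      exact ⟨y, z, hd.trans_lt h, hg.trans_lt ENNReal.one_lt_top, hxyz⟩
    · rintro ⟨y, z, hd, hg, hxyz⟩
      exact (lpNorm_le_mul p hp a ha x y z hxyz).trans_lt (ENNReal.mul_lt_top hd hg)
  · refine le_antisymm ?_ ?_
    · exact le_iInf fun y => le_iInf fun z => le_iInf fun hxyz =>
        lpNorm_le_mul p hp a ha x y z hxyz
    · rcases eq_or_ne (lpNorm p x) ∞ with h | h
      · rw [h]; exact le_top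
      · obtain ⟨y, z, hd, hg, hxyz⟩ := exists_factorization p hp a ha x h
        refine iInf_le_of_le y (iInf_le_of_le z (iInf_le_of_le hxyz ?_))
        calc dNorm a p y * gNorm a p z ≤ lpNorm p x * 1 := mul_le_mul' hd hg
          _ = lpNorm p x := mul_one _
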